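/- arXiv:2302.06084 — 3 statements merged into one kernel-verified Lean document; each statement's English description precedes it below -/
import Mathlib

section
/- Let n ≥ 1, let A be a finite-dimensional complex inner product space, let a₀ ∈ A be a unit vector, let (φ_i)_{i∈[n]} be an orthonormal family in A, and let p be a probability distribution on [n]. Let (e_i)_{i∈[n]} denote the standard orthonormal basis of ℂⁿ and fix the distinguished basis vector e₁. Suppose U_p is a unitary operator on A ⊗ ℂⁿ satisfying U_p(a₀ ⊗ e₁) = Σ_{i∈[n]} √(p_i) · (φ_i ⊗ e_i), and U_copy is a unitary operator on ℂⁿ ⊗ ℂⁿ satisfying U_copy(e_i ⊗ e₁) = e_i ⊗ e_i for all i ∈ [n]. Define Ũ_p := (U_p† ⊗ I_{ℂⁿ}) ∘ (I_A ⊗ U_copy) ∘ (U_p ⊗ I_{ℂⁿ}) on A ⊗ ℂⁿ ⊗ ℂⁿ. Then for every k ∈ [n], the inner product ⟨a₀ ⊗ e₁ ⊗ e_k, Ũ_p(a₀ ⊗ e₁ ⊗ e₁)⟩ equals p_k. -/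
open scoped ComplexInnerProductSpace

/-- The tensor product of two vectors of Euclidean spaces, realized concretely:
`(tp f g) (a, b) = f a * g b`.  This realizes `EuclideanSpace ℂ (α × β)` as the
tensor product `EuclideanSpace ℂ α ⊗ EuclideanSpace ℂ β` with the induced inner
product `⟪u₁ ⊗ v₁, u₂ ⊗ v₂⟫ = ⟪u₁, u₂⟫ ⟪v₁, v₂⟫`. -/
noncomputable def tp {α β : Type*} (f : EuclideanSpace ℂ α) (g : EuclideanSpace ℂ β) :
    EuclideanSpace ℂ (α × β) := WithLp.toLp 2 (fun x => f x.1 * g x.2)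

/-- Tensor of a vector of `EuclideanSpace ℂ α` with a vector of
`EuclideanSpace ℂ (β × γ)`, placed in `EuclideanSpace ℂ ((α × β) × γ)`. -/
noncomputable def tpL {α β γ : Type*} (a : EuclideanSpace ℂ α) (z : EuclideanSpace ℂ (β × γ)) :
    EuclideanSpace ℂ ((α × β) × γ) := WithLp.toLp 2 (fun x => a x.1.1 * z (x.1.2, x.2))

/-- The standard orthonormal basis vector `e_i` of `ℂⁿ`. -/
noncomputable def eb {n : ℕ} (i : Fin n) : EuclideanSpace ℂ (Fin n) :=
  EuclideanSpace.single i 1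


lemma tp_inner {α β : Type*} [Fintype α] [Fintype β]
    (f u : EuclideanSpace ℂ α) (g v : EuclideanSpace ℂ β) :
    ⟪tp f g, tp u v⟫ = ⟪f, u⟫ * ⟪g, v⟫ := by
  simp only [tp, PiLp.inner_apply, RCLike.inner_apply, PiLp.toLp_apply]
  rw [Finset.sum_mul_sum, Fintype.sum_prod_type]
  congr 1; ext a; congr 1; ext b; simp [map_mul]; ring

lemma eb_inner {n : ℕ} (i j : Fin n) : ⟪eb i, eb j⟫ = if i = j then (1:ℂ) else 0 := by
  simp [eb, EuclideanSpace.inner_single_left, EuclideanSpace.single_apply, eq_comm]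

lemma tp_sum_left {α β γ : Type*} (s : Finset γ) (f : γ → EuclideanSpace ℂ α)
    (g : EuclideanSpace ℂ β) : tp (∑ i ∈ s, f i) g = ∑ i ∈ s, tp (f i) g := by
  ext x
  simp [tp, Finset.sum_mul]

lemma tp_smul_left {α β : Type*} (c : ℂ) (f : EuclideanSpace ℂ α) (g : EuclideanSpace ℂ β) :
    tp (c • f) g = c • tp f g := by
  ext x
  simp [tp, mul_assoc]

lemma tp_tp_eq_tpL {α β γ : Type*} (a : EuclideanSpace ℂ α) (b : EuclideanSpace ℂ β)
    (c : EuclideanSpace ℂ γ) : tp (tp a b) c = tpL a (tp b c) := by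
  ext x
  simp [tp, tpL]
  ring

/-- Let `n ≥ 1`, let `A` be a finite-dimensional complex inner product
space (realized as `EuclideanSpace ℂ ι`), `a₀ ∈ A` a unit vector, `(φ i)` an orthonormal
family in `A`, and `p` a probability distribution on `[n]`.  Let `U_p` be a unitary on
`A ⊗ ℂⁿ` with `U_p (a₀ ⊗ e₁) = ∑ i, √(p i) • (φ i ⊗ e i)`, and `U_copy` a unitary on
`ℂⁿ ⊗ ℂⁿ` with `U_copy (e i ⊗ e₁) = e i ⊗ e i`.  Let `UpI = U_p ⊗ I`, `IUcopy = I ⊗ U_copy`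
and `UpdI = U_p† ⊗ I` (the adjoint of a unitary being its inverse `Up.symm`), so that
`Ũ_p = UpdI ∘ IUcopy ∘ UpI`.  Then for every `k`,
`⟪a₀ ⊗ e₁ ⊗ e_k, Ũ_p (a₀ ⊗ e₁ ⊗ e₁)⟫ = p k`. -/
theorem stmt0 {n : ℕ} (hn : 1 ≤ n) {ι : Type*} [Fintype ι] [DecidableEq ι]
    (a₀ : EuclideanSpace ℂ ι) (ha₀ : ‖a₀‖ = 1)
    (φ : Fin n → EuclideanSpace ℂ ι) (hφ : Orthonormal ℂ φ)
    (p : Fin n → ℝ) (hp0 : ∀ i, 0 ≤ p i) (hp1 : ∑ i, p i = 1)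
    (e₁ : EuclideanSpace ℂ (Fin n)) (he₁ : e₁ = eb ⟨0, hn⟩)
    (Up : EuclideanSpace ℂ (ι × Fin n) ≃ₗᵢ[ℂ] EuclideanSpace ℂ (ι × Fin n))
    (hUp : Up (tp a₀ e₁) = ∑ i, (Real.sqrt (p i) : ℂ) • tp (φ i) (eb i))
    (Ucopy : EuclideanSpace ℂ (Fin n × Fin n) ≃ₗᵢ[ℂ] EuclideanSpace ℂ (Fin n × Fin n))
    (hUcopy : ∀ i : Fin n, Ucopy (tp (eb i) e₁) = tp (eb i) (eb i))
    -- `UpI = U_p ⊗ I` on `A ⊗ ℂⁿ ⊗ ℂⁿ`: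
    (UpI : EuclideanSpace ℂ ((ι × Fin n) × Fin n) ≃ₗᵢ[ℂ] EuclideanSpace ℂ ((ι × Fin n) × Fin n))
    (hUpI : ∀ (z : EuclideanSpace ℂ (ι × Fin n)) (c : EuclideanSpace ℂ (Fin n)),
      UpI (tp z c) = tp (Up z) c)
    -- `IUcopy = I ⊗ U_copy` on `A ⊗ ℂⁿ ⊗ ℂⁿ`:
    (IUcopy : EuclideanSpace ℂ ((ι × Fin n) × Fin n) ≃ₗᵢ[ℂ] EuclideanSpace ℂ ((ι × Fin n) × Fin n))
    (hIUcopy : ∀ (a : EuclideanSpace ℂ ι) (z : EuclideanSpace ℂ (Fin n × Fin n)),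
      IUcopy (tpL a z) = tpL a (Ucopy z))
    -- `UpdI = U_p† ⊗ I` on `A ⊗ ℂⁿ ⊗ ℂⁿ`:
    (UpdI : EuclideanSpace ℂ ((ι × Fin n) × Fin n) ≃ₗᵢ[ℂ] EuclideanSpace ℂ ((ι × Fin n) × Fin n))
    (hUpdI : ∀ (z : EuclideanSpace ℂ (ι × Fin n)) (c : EuclideanSpace ℂ (Fin n)),
      UpdI (tp z c) = tp (Up.symm z) c) :
    ∀ k : Fin n,
      ⟪tp (tp a₀ e₁) (eb k), UpdI (IUcopy (UpI (tp (tp a₀ e₁) e₁)))⟫ = (p k : ℂ) := by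
  intro k
  set c : Fin n → ℂ := fun i => (Real.sqrt (p i) : ℂ) with hc
  have step1 : UpI (tp (tp a₀ e₁) e₁) = ∑ i, c i • tp (tp (φ i) (eb i)) e₁ := by
    rw [hUpI, hUp, tp_sum_left]
    exact Finset.sum_congr rfl fun i _ => tp_smul_left _ _ _
  have step2 : IUcopy (UpI (tp (tp a₀ e₁) e₁)) = ∑ i, c i • tp (tp (φ i) (eb i)) (eb i) := by
    rw [step1, map_sum]
    refine Finset.sum_congr rfl fun i _ => ?_
    rw [map_smul, tp_tp_eq_tpL, hIUcopy, hUcopy, ← tp_tp_eq_tpL]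
  have step3 : UpdI (IUcopy (UpI (tp (tp a₀ e₁) e₁)))
      = ∑ i, c i • tp (Up.symm (tp (φ i) (eb i))) (eb i) := by
    rw [step2, map_sum]
    refine Finset.sum_congr rfl fun i _ => ?_
    rw [map_smul, hUpdI]
  rw [step3, inner_sum]
  have he₁e₁ : ⟪e₁, e₁⟫ = (1:ℂ) := by rw [he₁]; simpa using eb_inner (n := n) ⟨0, hn⟩ ⟨0, hn⟩
  have ha₀a₀ : ⟪a₀, a₀⟫ = (1:ℂ) := by
    rw [inner_self_eq_norm_sq_to_K, ha₀]; norm_num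
  have hφite : ∀ i j : Fin n, ⟪φ i, φ j⟫ = if i = j then (1:ℂ) else 0 :=
    orthonormal_iff_ite.mp hφ
  have key : ∀ i : Fin n,
      ⟪tp (tp a₀ e₁) (eb k), c i • tp (Up.symm (tp (φ i) (eb i))) (eb i)⟫
      = if i = k then (p k : ℂ) else 0 := by
    intro i
    rw [inner_smul_right, tp_inner, eb_inner]
    by_cases hik : k = i
    · subst hik
      simp only [if_pos rfl, mul_one]
      rw [← Up.inner_map_map (tp a₀ e₁), LinearIsometryEquiv.apply_symm_apply, hUp, sum_inner]
      have : ∀ j : Fin n,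
          ⟪c j • tp (φ j) (eb j), tp (φ k) (eb k)⟫ = if j = k then c k else 0 := by
        intro j
        rw [inner_smul_left, tp_inner, hφite, eb_inner]
        by_cases hjk : j = k
        · subst hjk
          simp [hc, Complex.conj_ofReal]
        · simp [hjk]
      rw [Finset.sum_congr rfl fun j _ => this j]
      simp only [Finset.sum_ite_eq' Finset.univ k, Finset.mem_univ, if_pos, if_pos rfl]
      rw [hc]
      show (Real.sqrt (p k) : ℂ) * ((Real.sqrt (p k) : ℂ) * 1) = (p k : ℂ)
      rw [mul_one, ← Complex.ofReal_mul, Real.mul_self_sqrt (hp0 k)]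
    · rw [if_neg hik, if_neg fun h => hik h.symm]
      ring
  rw [Finset.sum_congr rfl fun i _ => key i]
  simp
end

section
/- Under the hypotheses of the previous statement (purified oracle U_p for a probability distribution p on [n], copy unitary U_copy, Ũ_p := (U_p† ⊗ I)(I ⊗ U_copy)(U_p ⊗ I), and Π the orthogonal projection onto (ℂ·a₀) ⊗ (ℂ·e₁) ⊗ ℂⁿ), the squared norm of the projected state satisfies ‖Π(Ũ_p(a₀ ⊗ e₁ ⊗ e₁))‖² = Σ_{i∈[n]} p_i². -/
open scoped ComplexInnerProductSpace

lemma inner_tp {α β : Type*} [Fintype α] [Fintype β]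
    (f f' : EuclideanSpace ℂ α) (g g' : EuclideanSpace ℂ β) :
    ⟪tp f g, tp f' g'⟫ = ⟪f, f'⟫ * ⟪g, g'⟫ := by
  classical
  simp only [tp, PiLp.inner_apply, RCLike.inner_apply, PiLp.toLp_apply]
  rw [Fintype.sum_prod_type, Finset.sum_mul_sum]
  refine Finset.sum_congr rfl fun a _ => Finset.sum_congr rfl fun b _ => ?_
  simp [map_mul]; ring

lemma inner_eb {n : ℕ} (j k : Fin n) : ⟪eb j, eb k⟫ = if j = k then 1 else 0 := by
  simp [eb, EuclideanSpace.inner_single_left, EuclideanSpace.single_apply, eq_comm]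

/-- Let `n ≥ 1`, let `A` be a finite-dimensional complex inner product
space (realized as `EuclideanSpace ℂ ι`), `a₀ ∈ A` a unit vector, `(φ i)` an orthonormal
family in `A`, and `p` a probability distribution on `[n]`.  Let `U_p` be a unitary on
`A ⊗ ℂⁿ` with `U_p (a₀ ⊗ e₁) = ∑ i, √(p i) • (φ i ⊗ e i)`, and `U_copy` a unitary on
`ℂⁿ ⊗ ℂⁿ` with `U_copy (e i ⊗ e₁) = e i ⊗ e i`.  Let `UpI = U_p ⊗ I`, `IUcopy = I ⊗ U_copy`
and `UpdI = U_p† ⊗ I` (the adjoint of a unitary being its inverse `Up.symm`), so that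
`Ũ_p = UpdI ∘ IUcopy ∘ UpI`.  Let `Π` be the orthogonal projection
of `A ⊗ ℂⁿ ⊗ ℂⁿ` onto `(ℂ·a₀) ⊗ (ℂ·e₁) ⊗ ℂⁿ`, the span of the orthonormal family
`(a₀ ⊗ e₁ ⊗ e_k)_k`.  Then `‖Π (Ũ_p (a₀ ⊗ e₁ ⊗ e₁))‖² = ∑ i, (p i)²`. -/
theorem stmt2 {n : ℕ} (hn : 1 ≤ n) {ι : Type*} [Fintype ι] [DecidableEq ι]
    (a₀ : EuclideanSpace ℂ ι) (ha₀ : ‖a₀‖ = 1)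
    (φ : Fin n → EuclideanSpace ℂ ι) (hφ : Orthonormal ℂ φ)
    (p : Fin n → ℝ) (hp0 : ∀ i, 0 ≤ p i) (hp1 : ∑ i, p i = 1)
    (e₁ : EuclideanSpace ℂ (Fin n)) (he₁ : e₁ = eb ⟨0, hn⟩)
    (Up : EuclideanSpace ℂ (ι × Fin n) ≃ₗᵢ[ℂ] EuclideanSpace ℂ (ι × Fin n))
    (hUp : Up (tp a₀ e₁) = ∑ i, (Real.sqrt (p i) : ℂ) • tp (φ i) (eb i))
    (Ucopy : EuclideanSpace ℂ (Fin n × Fin n) ≃ₗᵢ[ℂ] EuclideanSpace ℂ (Fin n × Fin n))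
    (hUcopy : ∀ i : Fin n, Ucopy (tp (eb i) e₁) = tp (eb i) (eb i))
    -- `UpI = U_p ⊗ I` on `A ⊗ ℂⁿ ⊗ ℂⁿ`:
    (UpI : EuclideanSpace ℂ ((ι × Fin n) × Fin n) ≃ₗᵢ[ℂ] EuclideanSpace ℂ ((ι × Fin n) × Fin n))
    (hUpI : ∀ (z : EuclideanSpace ℂ (ι × Fin n)) (c : EuclideanSpace ℂ (Fin n)),
      UpI (tp z c) = tp (Up z) c)
    -- `IUcopy = I ⊗ U_copy` on `A ⊗ ℂⁿ ⊗ ℂⁿ`: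
    (IUcopy : EuclideanSpace ℂ ((ι × Fin n) × Fin n) ≃ₗᵢ[ℂ] EuclideanSpace ℂ ((ι × Fin n) × Fin n))
    (hIUcopy : ∀ (a : EuclideanSpace ℂ ι) (z : EuclideanSpace ℂ (Fin n × Fin n)),
      IUcopy (tpL a z) = tpL a (Ucopy z))
    -- `UpdI = U_p† ⊗ I` on `A ⊗ ℂⁿ ⊗ ℂⁿ`:
    (UpdI : EuclideanSpace ℂ ((ι × Fin n) × Fin n) ≃ₗᵢ[ℂ] EuclideanSpace ℂ ((ι × Fin n) × Fin n))
    (hUpdI : ∀ (z : EuclideanSpace ℂ (ι × Fin n)) (c : EuclideanSpace ℂ (Fin n)),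
      UpdI (tp z c) = tp (Up.symm z) c) :
    -- `Π` is the orthogonal projection onto `(ℂ·a₀) ⊗ (ℂ·e₁) ⊗ ℂⁿ`, i.e. onto the span of
    -- the orthonormal family `(a₀ ⊗ e₁ ⊗ e_k)_{k ∈ [n]}`:
    ‖(Submodule.orthogonalProjectionOnto
        (Submodule.span ℂ (Set.range fun k : Fin n => tp (tp a₀ e₁) (eb k)))
        (UpdI (IUcopy (UpI (tp (tp a₀ e₁) e₁)))) :
      EuclideanSpace ℂ ((ι × Fin n) × Fin n))‖ ^ 2
      = ∑ i, (p i) ^ 2 := by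
  classical
  set v : Fin n → EuclideanSpace ℂ ((ι × Fin n) × Fin n) :=
    fun k => tp (tp a₀ e₁) (eb k) with hvdef
  set ψ : EuclideanSpace ℂ ((ι × Fin n) × Fin n) :=
    UpdI (IUcopy (UpI (tp (tp a₀ e₁) e₁))) with hψdef
  have hee : ⟪e₁, e₁⟫ = 1 := by rw [he₁, inner_eb]; simp
  have haa : ⟪a₀, a₀⟫ = 1 := by
    rw [inner_self_eq_norm_sq_to_K, ha₀]; norm_num
  have hv : Orthonormal ℂ v := by
    rw [orthonormal_iff_ite]
    intro j k
    simp only [hvdef]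
    rw [inner_tp, inner_tp, haa, hee, inner_eb]
    simp
  have hφ' := orthonormal_iff_ite.mp hφ
  -- compute ψ
  have hψval : ψ = ∑ i, (Real.sqrt (p i) : ℂ) • tp (Up.symm (tp (φ i) (eb i))) (eb i) := by
    rw [hψdef, hUpI, hUp, tp_sum_left]
    simp only [tp_smul_left]
    rw [map_sum, map_sum]
    refine Finset.sum_congr rfl fun i _ => ?_
    rw [map_smul, map_smul, tp_tp_eq_tpL, hIUcopy, hUcopy, ← tp_tp_eq_tpL, hUpdI]
  -- inner products with v k
  have hsym : ∀ w, ⟪tp a₀ e₁, Up.symm w⟫ = ⟪Up (tp a₀ e₁), w⟫ := fun w => by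
    rw [← LinearIsometryEquiv.inner_map_map Up, Up.apply_symm_apply]
  have key : ∀ k, ⟪v k, ψ⟫ = (p k : ℂ) := by
    intro k
    rw [hψval, inner_sum]
    simp only [inner_smul_right, hvdef, inner_tp, inner_eb, hsym, hUp, sum_inner,
      inner_smul_left, hφ', Complex.conj_ofReal, ite_mul, mul_ite, mul_one, mul_zero,
      zero_mul, one_mul, Finset.sum_ite_eq, Finset.sum_ite_eq', Finset.mem_univ, if_true]
    rw [← Complex.ofReal_mul, Real.mul_self_sqrt (hp0 k)]
  set m : EuclideanSpace ℂ ((ι × Fin n) × Fin n) := ∑ k, (p k : ℂ) • v k with hmdef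
  set K := Submodule.span ℂ (Set.range v) with hK
  have hm_mem : m ∈ K := Submodule.sum_mem _ fun k _ =>
    Submodule.smul_mem _ _ (Submodule.subset_span ⟨k, rfl⟩)
  have hinner_m : ∀ k, ⟪m, v k⟫ = (p k : ℂ) := by
    intro k
    rw [hmdef, sum_inner]
    simp only [inner_smul_left, Complex.conj_ofReal, orthonormal_iff_ite.mp hv,
      mul_ite, mul_one, mul_zero]
    simp
  have hproj : (Submodule.orthogonalProjectionOnto K ψ : EuclideanSpace ℂ ((ι × Fin n) × Fin n)) = m := by
    apply Submodule.eq_starProjection_of_mem_of_inner_eq_zero hm_mem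
    intro w hw
    induction hw using Submodule.span_induction with
    | mem x hx =>
      obtain ⟨k, rfl⟩ := hx
      have h := congrArg (starRingEnd ℂ) (key k)
      rw [inner_conj_symm, Complex.conj_ofReal] at h
      rw [inner_sub_left, h, hinner_m, sub_self]
    | zero => simp
    | add x y _ _ hx hy => rw [inner_add_right, hx, hy, add_zero]
    | smul c x _ hx => rw [inner_smul_right, hx, mul_zero]
  rw [hproj]
  have him : ⟪m, m⟫ = ((∑ i, (p i) ^ 2 : ℝ) : ℂ) := by
    rw [hmdef, hv.inner_sum]
    push_cast
    refine Finset.sum_congr rfl fun i _ => ?_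
    rw [Complex.conj_ofReal, sq]
  have hnorm : ⟪m, m⟫ = ((‖m‖ : ℂ)) ^ 2 := inner_self_eq_norm_sq_to_K m
  have : ((‖m‖ ^ 2 : ℝ) : ℂ) = ((∑ i, (p i) ^ 2 : ℝ) : ℂ) := by
    push_cast
    rw [← hnorm, him]; push_cast; ring
  exact_mod_cast this
end

section
/- Let ν ∈ (0, 1], ε ∈ (0, 1), let p and q be probability distributions on [n], set Δ := ‖p − q‖₂²/4, let t ≥ 20π/(νε) be a real number, and let Δ' be any real number satisfying |Δ' − Δ| ≤ 2π√Δ/t + π²/t². Then: (i) if ‖p − q‖₂ ≤ (1 − ν)ε, then Δ' < (1/4 − ν/8)·ε²; and (ii) if ‖p − q‖₂ ≥ ε, then Δ' ≥ (1/4 − ν/8)·ε². In particular, the decision rule 'output CLOSE if Δ' < (1/4 − ν/8)ε², else output FAR' correctly distinguishes the two promised cases. -/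
open Real

/-- Deterministic core of the correctness of the quantum `ℓ²`-closeness
tester.  Let `ν ∈ (0, 1]`, `ε ∈ (0, 1)`, let `p`, `q` be probability distributions on `[n]`,
set `Δ := ‖p − q‖₂²/4` with `‖p − q‖₂ := (∑ i, (p i − q i)²)^{1/2}`, let `t ≥ 20π/(νε)`,
and let `Δ'` satisfy `|Δ' − Δ| ≤ 2π√Δ/t + π²/t²`.  Then:
(i) if `‖p − q‖₂ ≤ (1 − ν)ε` then `Δ' < (1/4 − ν/8)ε²`; and
(ii) if `‖p − q‖₂ ≥ ε` then `Δ' ≥ (1/4 − ν/8)ε²`.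
Hence the rule "output CLOSE iff `Δ' < (1/4 − ν/8)ε²`" distinguishes the two promised cases. -/
theorem stmt12 {n : ℕ} (ν ε t Δ' : ℝ) (hν0 : 0 < ν) (hν1 : ν ≤ 1) (hε0 : 0 < ε) (hε1 : ε < 1)
    (p q : Fin n → ℝ) (hp0 : ∀ i, 0 ≤ p i) (hp1 : ∑ i, p i = 1)
    (hq0 : ∀ i, 0 ≤ q i) (hq1 : ∑ i, q i = 1)
    (ht : 20 * π / (ν * ε) ≤ t)
    (hΔ' : |Δ' - Real.sqrt (∑ i, (p i - q i) ^ 2) ^ 2 / 4| ≤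
      2 * π * Real.sqrt (Real.sqrt (∑ i, (p i - q i) ^ 2) ^ 2 / 4) / t + π ^ 2 / t ^ 2) :
    (Real.sqrt (∑ i, (p i - q i) ^ 2) ≤ (1 - ν) * ε → Δ' < (1 / 4 - ν / 8) * ε ^ 2) ∧
    (ε ≤ Real.sqrt (∑ i, (p i - q i) ^ 2) → (1 / 4 - ν / 8) * ε ^ 2 ≤ Δ') := by
  set D : ℝ := Real.sqrt (∑ i, (p i - q i) ^ 2) with hD
  have hD0 : 0 ≤ D := Real.sqrt_nonneg _
  have hπ : 0 < π := Real.pi_pos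
  have hνε : 0 < ν * ε := mul_pos hν0 hε0
  have ht0 : 0 < t := lt_of_lt_of_le (by positivity) ht
  have htνε : 20 * π ≤ t * (ν * ε) := by
    rw [div_le_iff₀ hνε] at ht; linarith
  have hsq : Real.sqrt (D ^ 2 / 4) = D / 2 := by
    rw [show D ^ 2 / 4 = (D / 2) ^ 2 by ring, Real.sqrt_sq (by linarith)]
  rw [hsq] at hΔ'
  have key : π / t ≤ ν * ε / 20 := by
    rw [div_le_div_iff₀ ht0 (by norm_num)]; nlinarith
  have hpt0 : 0 ≤ π / t := by positivity
  have hE : 2 * π * (D / 2) / t + π ^ 2 / t ^ 2 ≤ (ν * ε / 20) * D + (ν * ε / 20) ^ 2 := by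
    have e1 : 2 * π * (D / 2) / t = (π / t) * D := by ring
    have e2 : π ^ 2 / t ^ 2 = (π / t) ^ 2 := by rw [div_pow]
    rw [e1, e2]
    have h1 : (π / t) * D ≤ (ν * ε / 20) * D := mul_le_mul_of_nonneg_right key hD0
    have h2 : (π / t) ^ 2 ≤ (ν * ε / 20) ^ 2 := by nlinarith
    linarith
  obtain ⟨hlo, hhi⟩ := abs_le.mp hΔ'
  constructor
  · intro hd
    have hup : Δ' ≤ D ^ 2 / 4 + ((ν * ε / 20) * D + (ν * ε / 20) ^ 2) := by linarith
    nlinarith [mul_pos hν0 (pow_pos hε0 2), sq_nonneg D, sq_nonneg ε,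
      mul_le_mul_of_nonneg_right hd hD0, mul_nonneg hD0 hε0.le,
      mul_pos hν0 hε0, sq_nonneg (ν * ε)]
  · intro hd
    have hlow : D ^ 2 / 4 - ((ν * ε / 20) * D + (ν * ε / 20) ^ 2) ≤ Δ' := by linarith
    have hDe : 0 ≤ D - ε := by linarith
    nlinarith [sq_nonneg (D - ε), mul_nonneg hDe hε0.le,
      mul_nonneg (sub_nonneg.2 hν1) (mul_nonneg hDe hε0.le),
      mul_pos hν0 (pow_pos hε0 2),
      mul_nonneg (mul_nonneg (sub_nonneg.2 hν1) hν0.le) (sq_nonneg ε)]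
end
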